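/- If q : Q × Σ → Q is the transition structure of a deterministic finite automaton and the successor relation on Turing machine configurations changes only a bounded window around the head position, then there is a finite automaton reading two configuration encodings interleaved symbol-by-symbol that accepts exactly when the second encoded configuration is the successor of the first. -/

import Mathlib

/-- Encoding alphabet for Turing machine configurations: control states, tape symbols,
and the end-of-tape marker `#`. -/
abbrev TMAlpha (Q Γ : Type) := Q ⊕ Γ ⊕ Unit

/-- Encoding of a configuration `(q, w, j)` as the string
`w₁ … w_{j-1} q w_j … w_{|w|} #`. -/
def encodeConf {Q Γ : Type} (q : Q) (w : List Γ) (j : ℕ) : List (TMAlpha Q Γ) :=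
  (w.take j).map (fun a => Sum.inr (Sum.inl a)) ++ [Sum.inl q] ++
    (w.drop j).map (fun a => Sum.inr (Sum.inl a)) ++ [Sum.inr (Sum.inr ())]

/-- One step of a deterministic Turing machine with transition function `δ`
(`true` = move right, `false` = move left); the tape is extended with a blank when the
head moves past the right end; the machine never moves left of the initial cell.
The successor configuration differs from the original only in a bounded window around
the head position. -/
def tmStep {Q Γ : Type} (δ : Q → Γ → Q × Γ × Bool) (blank : Γ) :
    Q × List Γ × ℕ → Option (Q × List Γ × ℕ)
  | (q, w, j) =>
    match w[j]? with
    | none => none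
    | some a =>
      let t := δ q a
      let w' := w.set j t.2.1
      if t.2.2 then
        some (t.1, if j + 1 = w.length then w' ++ [blank] else w', j + 1)
      else if j = 0 then none else some (t.1, w', j - 1)

/-- Padding an encoding with `#` markers up to length `n`. -/
def padEnc {Q Γ : Type} (l : List (TMAlpha Q Γ)) (n : ℕ) : List (TMAlpha Q Γ) :=
  l ++ List.replicate (n - l.length) (Sum.inr (Sum.inr ()))

/-- The language of two configuration encodings read synchronously symbol-by-symbol such
that the second encoded configuration is the successor of the first. -/
def succLang {Q Γ : Type} (δ : Q → Γ → Q × Γ × Bool) (blank : Γ) :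
    Language (TMAlpha Q Γ × TMAlpha Q Γ) :=
  { x | ∃ (q : Q) (w : List Γ) (j : ℕ) (q' : Q) (w' : List Γ) (j' : ℕ),
      tmStep δ blank (q, w, j) = some (q', w', j') ∧
      x = List.zip
        (padEnc (encodeConf q w j)
          (max (encodeConf q w j).length (encodeConf q' w' j').length))
        (padEnc (encodeConf q' w' j')
          (max (encodeConf q w j).length (encodeConf q' w' j').length)) }

namespace Stmt16

variable {Q Γ : Type}

def gg (a : Γ) : TMAlpha Q Γ := Sum.inr (Sum.inl a)
def hh : TMAlpha Q Γ := Sum.inr (Sum.inr ())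
def ee (l : List Γ) : List (TMAlpha Q Γ × TMAlpha Q Γ) := l.map (fun c => (gg c, gg c))


lemma padEnc_self (l : List (TMAlpha Q Γ)) : padEnc l l.length = l := by
  simp [padEnc]

lemma padEnc_succ (l : List (TMAlpha Q Γ)) : padEnc l (l.length + 1) = l ++ [hh] := by
  simp [padEnc, hh]

lemma set_append (u : List Γ) (a b : Γ) (v : List Γ) :
    (u ++ a :: v).set u.length b = u ++ b :: v := by
  induction u with
  | nil => rfl
  | cons x u ih => simp [List.set, ih]

lemma get?_append (u : List Γ) (a : Γ) (v : List Γ) :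
    (u ++ a :: v)[u.length]? = some a := by
  induction u with
  | nil => rfl
  | cons x u ih => simpa using ih

/-- expansion of encodeConf at a split point -/
lemma enc_eq (q : Q) (u v : List Γ) (a : Γ) :
    encodeConf q (u ++ a :: v) u.length =
      u.map gg ++ (Sum.inl q :: gg a :: (v.map gg ++ [hh])) := by
  unfold encodeConf gg hh
  rw [List.take_left, List.drop_left]
  simp

lemma enc_eq' (q : Q) (w : List Γ) :
    encodeConf q w w.length = w.map gg ++ [Sum.inl q, hh] := by
  unfold encodeConf gg hh
  simp

lemma enc_eq2 (q' : Q) (b : Γ) (u v : List Γ) :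
    encodeConf q' (u ++ b :: v) (u.length + 1) =
      u.map gg ++ (gg b :: Sum.inl q' :: (v.map gg ++ [hh])) := by
  cases v with
  | nil =>
    have := enc_eq' q' (u ++ [b])
    simpa using this
  | cons c v₂ =>
    have := enc_eq q' (u ++ [b]) v₂ c
    simp only [List.append_assoc, List.cons_append, List.nil_append, List.length_append,
      List.length_cons, List.length_nil] at this ⊢
    simpa using this

lemma enc_eq3 (q : Q) (u : List Γ) (c a : Γ) (v : List Γ) :
    encodeConf q (u ++ c :: a :: v) (u.length + 1) =
      u.map gg ++ (gg c :: Sum.inl q :: gg a :: (v.map gg ++ [hh])) := by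
  have := enc_eq q (u ++ [c]) v a
  simp only [List.append_assoc, List.cons_append, List.nil_append, List.length_append,
    List.length_cons, List.length_nil] at this
  simpa using this

lemma zip_ee_append (u : List Γ) (x y : List (TMAlpha Q Γ)) :
    (u.map gg ++ x).zip (u.map gg ++ y) = ee u ++ x.zip y := by
  rw [List.zip_append (by simp), List.zip_map']
  rfl

lemma zip_hh (v : List Γ) :
    ((v.map gg ++ [hh]) : List (TMAlpha Q Γ)).zip (v.map gg ++ [hh]) =
      ee v ++ [(hh, hh)] := by
  rw [List.zip_append (by simp), List.zip_map']
  rfl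

/-- zip shape, right move, no extension -/
lemma zipR (q q' : Q) (b : Γ) (u : List Γ) (a : Γ) (v : List Γ) :
    (padEnc (encodeConf q (u ++ a :: v) u.length)
        (max (encodeConf q (u ++ a :: v) u.length).length
          (encodeConf q' (u ++ b :: v) (u.length + 1)).length)).zip
      (padEnc (encodeConf q' (u ++ b :: v) (u.length + 1))
        (max (encodeConf q (u ++ a :: v) u.length).length
          (encodeConf q' (u ++ b :: v) (u.length + 1)).length)) =
      ee u ++ ((Sum.inl q, gg b) :: (gg a, Sum.inl q') :: (ee v ++ [(hh, hh)])) := by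
  rw [enc_eq, enc_eq2]
  have hlen : ((u.map gg ++ (Sum.inl q :: gg a :: (v.map gg ++ [hh]))) :
      List (TMAlpha Q Γ)).length =
      ((u.map gg ++ (gg b :: Sum.inl q' :: (v.map gg ++ [hh]))) :
      List (TMAlpha Q Γ)).length := by simp
  rw [← hlen, max_self, padEnc_self, hlen, padEnc_self]
  rw [zip_ee_append, List.zip_cons_cons, List.zip_cons_cons, zip_hh]

/-- zip shape, right move with extension -/
lemma zipE (q q' : Q) (b : Γ) (u : List Γ) (a : Γ) (blank : Γ) :
    (padEnc (encodeConf q (u ++ [a]) u.length)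
        (max (encodeConf q (u ++ [a]) u.length).length
          (encodeConf q' (u ++ [b, blank]) (u.length + 1)).length)).zip
      (padEnc (encodeConf q' (u ++ [b, blank]) (u.length + 1))
        (max (encodeConf q (u ++ [a]) u.length).length
          (encodeConf q' (u ++ [b, blank]) (u.length + 1)).length)) =
      ee u ++ [(Sum.inl q, gg b), (gg a, Sum.inl q'), (hh, gg blank), (hh, hh)] := by
  have h1 : encodeConf q (u ++ [a]) u.length =
      u.map gg ++ [Sum.inl q, gg a, hh] := by
    have := enc_eq q u ([] : List Γ) a
    simpa using this
  have h2 : encodeConf q' (u ++ [b, blank]) (u.length + 1) =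
      u.map gg ++ [gg b, Sum.inl q', gg blank, hh] := by
    have := enc_eq2 q' b u [blank]
    simpa using this
  rw [h1, h2]
  have hlen1 : ((u.map gg ++ [Sum.inl q, gg a, hh]) : List (TMAlpha Q Γ)).length
      = u.length + 3 := by simp
  have hlen2 : ((u.map gg ++ [gg b, Sum.inl q', gg blank, hh]) :
      List (TMAlpha Q Γ)).length = u.length + 4 := by simp
  rw [hlen1, hlen2, max_eq_right (by omega), show u.length + 4 =
    ((u.map gg ++ [Sum.inl q, gg a, hh]) : List (TMAlpha Q Γ)).length + 1 by simp,
    padEnc_succ, show ((u.map gg ++ [Sum.inl q, gg a, hh]) :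
      List (TMAlpha Q Γ)).length + 1 =
    ((u.map gg ++ [gg b, Sum.inl q', gg blank, hh]) :
      List (TMAlpha Q Γ)).length by simp, padEnc_self]
  rw [List.append_assoc]
  rw [zip_ee_append]
  rfl

/-- zip shape, left move -/
lemma zipL (q q' : Q) (b : Γ) (u : List Γ) (c a : Γ) (v : List Γ) :
    (padEnc (encodeConf q (u ++ c :: a :: v) (u.length + 1))
        (max (encodeConf q (u ++ c :: a :: v) (u.length + 1)).length
          (encodeConf q' (u ++ c :: b :: v) u.length).length)).zip
      (padEnc (encodeConf q' (u ++ c :: b :: v) u.length)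
        (max (encodeConf q (u ++ c :: a :: v) (u.length + 1)).length
          (encodeConf q' (u ++ c :: b :: v) u.length).length)) =
      ee u ++ ((gg c, Sum.inl q') :: (Sum.inl q, gg c) :: (gg a, gg b) ::
        (ee v ++ [(hh, hh)])) := by
  rw [enc_eq3, enc_eq q' u (b :: v) c]
  have hlen : ((u.map gg ++ (gg c :: Sum.inl q :: gg a :: (v.map gg ++ [hh]))) :
      List (TMAlpha Q Γ)).length =
      ((u.map gg ++ (Sum.inl q' :: gg c :: ((b :: v).map gg ++ [hh]))) :
      List (TMAlpha Q Γ)).length := by simp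
  rw [← hlen, max_self, padEnc_self, hlen, padEnc_self]
  rw [zip_ee_append]
  simp only [List.map_cons, List.cons_append]
  rw [List.zip_cons_cons, List.zip_cons_cons, List.zip_cons_cons, zip_hh]

inductive St (Q Γ : Type) where
  | start | r1 (q : Q) (b : Γ) | r2 | l1 (c : Γ) (q' : Q) | l2 (q q' : Q)
  | tl | r4 | acc | dead
deriving DecidableEq, Fintype

variable [DecidableEq Q] [DecidableEq Γ]

def step (δ : Q → Γ → Q × Γ × Bool) (blank : Γ) :
    St Q Γ → (TMAlpha Q Γ × TMAlpha Q Γ) → St Q Γ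
  | .start, (Sum.inr (Sum.inl c), Sum.inr (Sum.inl c')) =>
      if c = c' then .start else .dead
  | .start, (Sum.inl q, Sum.inr (Sum.inl b)) => .r1 q b
  | .start, (Sum.inr (Sum.inl c), Sum.inl q') => .l1 c q'
  | .r1 q b, (Sum.inr (Sum.inl a), Sum.inl q') =>
      if δ q a = (q', b, true) then .r2 else .dead
  | .r2, (Sum.inr (Sum.inl c), Sum.inr (Sum.inl c')) => if c = c' then .tl else .dead
  | .r2, (Sum.inr (Sum.inr _), Sum.inr (Sum.inl b)) => if b = blank then .r4 else .dead
  | .tl, (Sum.inr (Sum.inl c), Sum.inr (Sum.inl c')) => if c = c' then .tl else .dead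
  | .tl, (Sum.inr (Sum.inr _), Sum.inr (Sum.inr _)) => .acc
  | .r4, (Sum.inr (Sum.inr _), Sum.inr (Sum.inr _)) => .acc
  | .l1 c q', (Sum.inl q, Sum.inr (Sum.inl c')) => if c = c' then .l2 q q' else .dead
  | .l2 q q', (Sum.inr (Sum.inl a), Sum.inr (Sum.inl b)) =>
      if δ q a = (q', b, false) then .tl else .dead
  | _, _ => .dead

variable (δ : Q → Γ → Q × Γ × Bool) (blank : Γ)

def M : DFA (TMAlpha Q Γ × TMAlpha Q Γ) (St Q Γ) :=
  ⟨step δ blank, .start, {.acc}⟩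

lemma foldl_ee_start (l : List Γ) (x : List (TMAlpha Q Γ × TMAlpha Q Γ)) :
    List.foldl (step δ blank) .start (ee l ++ x) =
      List.foldl (step δ blank) .start x := by
  induction l with
  | nil => rfl
  | cons c l ih => simpa [ee, step, gg] using ih

lemma foldl_ee_tl (l : List Γ) (x : List (TMAlpha Q Γ × TMAlpha Q Γ)) :
    List.foldl (step δ blank) .tl (ee l ++ x) =
      List.foldl (step δ blank) .tl x := by
  induction l with
  | nil => rfl
  | cons c l ih => simpa [ee, step, gg] using ih

lemma evalR {q q' : Q} {a b : Γ} (hδ : δ q a = (q', b, true)) (u : List Γ)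
    (c : Γ) (v : List Γ) :
    List.foldl (step δ blank) .start
      (ee u ++ ((Sum.inl q, gg b) :: (gg a, Sum.inl q') ::
        (ee (c :: v) ++ [(hh, hh)]))) = .acc := by
  rw [foldl_ee_start]
  show List.foldl (step δ blank) _ _ = _
  simp only [ee, List.map_cons, List.cons_append, List.foldl_cons]
  rw [show step δ blank .start (Sum.inl q, gg b) = .r1 q b from rfl,
    show step δ blank (.r1 q b) (gg a, Sum.inl q') = .r2 by simp [step, gg, hδ],
    show step δ blank .r2 (gg c, gg c) = .tl by simp [step, gg]]
  rw [show (List.map (fun c => ((gg c : TMAlpha Q Γ), (gg c : TMAlpha Q Γ))) v) = ee v from rfl,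
    foldl_ee_tl]
  simp [step, hh]

lemma evalE {q q' : Q} {a b : Γ} (hδ : δ q a = (q', b, true)) (u : List Γ) :
    List.foldl (step δ blank) .start
      (ee u ++ [(Sum.inl q, gg b), (gg a, Sum.inl q'), (hh, gg blank), (hh, hh)]) = .acc := by
  rw [foldl_ee_start]
  simp only [List.foldl_cons]
  rw [show step δ blank .start (Sum.inl q, gg b) = .r1 q b from rfl,
    show step δ blank (.r1 q b) (gg a, Sum.inl q') = .r2 by simp [step, gg, hδ],
    show step δ blank .r2 (hh, gg blank) = .r4 by simp [step, gg, hh],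
    show step δ blank .r4 (hh, hh) = .acc from rfl]
  rfl

lemma evalL {q q' : Q} {a b : Γ} (hδ : δ q a = (q', b, false)) (u : List Γ)
    (c : Γ) (v : List Γ) :
    List.foldl (step δ blank) .start
      (ee u ++ ((gg c, Sum.inl q') :: (Sum.inl q, gg c) :: (gg a, gg b) ::
        (ee v ++ [(hh, hh)]))) = .acc := by
  rw [foldl_ee_start]
  simp only [List.foldl_cons]
  rw [show step δ blank .start (gg c, Sum.inl q') = .l1 c q' from rfl,
    show step δ blank (.l1 c q') (Sum.inl q, gg c) = .l2 q q' by simp [step, gg],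
    show step δ blank (.l2 q q') (gg a, gg b) = .tl by simp [step, gg, hδ],
    foldl_ee_tl]
  simp [step, hh]

/-- r2 suffix language -/
def R2 (blank : Γ) (y : List (TMAlpha Q Γ × TMAlpha Q Γ)) : Prop :=
  (∃ (c : Γ) (l : List Γ), y = (gg c, gg c) :: (ee l ++ [(hh, hh)])) ∨
    y = [(hh, gg blank), (hh, hh)]

/-- suffix languages of the states -/
def Suf (δ : Q → Γ → Q × Γ × Bool) (blank : Γ) :
    St Q Γ → List (TMAlpha Q Γ × TMAlpha Q Γ) → Prop
  | .acc, x => x = []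
  | .dead, _ => False
  | .tl, x => ∃ l : List Γ, x = ee l ++ [(hh, hh)]
  | .r4, x => x = [(hh, hh)]
  | .r2, x => R2 blank x
  | .r1 q b, x => ∃ (a : Γ) (q' : Q) (y : List (TMAlpha Q Γ × TMAlpha Q Γ)),
      δ q a = (q', b, true) ∧ x = (gg a, Sum.inl q') :: y ∧ R2 blank y
  | .l2 q q', x => ∃ (a b : Γ) (l : List Γ), δ q a = (q', b, false) ∧
      x = (gg a, gg b) :: (ee l ++ [(hh, hh)])
  | .l1 c q', x => ∃ (q : Q) (a b : Γ) (l : List Γ), δ q a = (q', b, false) ∧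
      x = (Sum.inl q, gg c) :: (gg a, gg b) :: (ee l ++ [(hh, hh)])
  | .start, x =>
      (∃ (l : List Γ) (q : Q) (b : Γ) (a : Γ) (q' : Q)
          (y : List (TMAlpha Q Γ × TMAlpha Q Γ)),
        δ q a = (q', b, true) ∧
        x = ee l ++ ((Sum.inl q, gg b) :: (gg a, Sum.inl q') :: y) ∧ R2 blank y) ∨
      (∃ (l : List Γ) (c : Γ) (q' : Q) (q : Q) (a b : Γ) (l₂ : List Γ),
        δ q a = (q', b, false) ∧
        x = ee l ++ ((gg c, Sum.inl q') :: (Sum.inl q, gg c) :: (gg a, gg b) ::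
          (ee l₂ ++ [(hh, hh)])))

lemma suf_step (δ : Q → Γ → Q × Γ × Bool) (blank : Γ) (s : St Q Γ)
    (p : TMAlpha Q Γ × TMAlpha Q Γ) (y : List (TMAlpha Q Γ × TMAlpha Q Γ))
    (h : Suf δ blank (step δ blank s p) y) : Suf δ blank s (p :: y) := by
  obtain ⟨p1, p2⟩ := p
  cases s <;> rcases p1 with q1 | c1 | u1 <;> rcases p2 with q2 | c2 | u2 <;>
      simp only [step] at h <;>
      try exact absurd h (by exact id)
  -- start, (inl q1, gg c2) → r1
  case start.inl.inr.inl =>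
    obtain ⟨a, q', z, hδ, hy, hr2⟩ := h
    exact Or.inl ⟨[], q1, c2, a, q', z, hδ, by simp [ee, gg, hy], hr2⟩
  -- start, (gg c1, inl q2) → l1
  case start.inr.inl.inl =>
    obtain ⟨q, a, b, l, hδ, hy⟩ := h
    exact Or.inr ⟨[], c1, q2, q, a, b, l, hδ, by simp [ee, gg, hy]⟩
  -- start, (gg c1, gg c2)
  case start.inr.inl.inr.inl =>
    by_cases hc : c1 = c2
    · subst hc
      rw [if_pos rfl] at h
      rcases h with ⟨l, q, b, a, q', z, hδ, hy, hr2⟩ | ⟨l, c, q', q, a, b, l₂, hδ, hy⟩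
      · exact Or.inl ⟨c1 :: l, q, b, a, q', z, hδ, by simp [ee, gg, hy], hr2⟩
      · exact Or.inr ⟨c1 :: l, c, q', q, a, b, l₂, hδ, by simp [ee, gg, hy]⟩
    · rw [if_neg hc] at h
      exact absurd h id
  -- r1, (gg a, inl q')
  case r1.inr.inl.inl q b =>
    by_cases hδ : δ q c1 = (q2, b, true)
    · rw [if_pos hδ] at h
      exact ⟨c1, q2, y, hδ, rfl, h⟩
    · rw [if_neg hδ] at h
      exact absurd h id
  -- r2, (gg c1, gg c2)
  case r2.inr.inl.inr.inl =>
    by_cases hc : c1 = c2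
    · subst hc
      rw [if_pos rfl] at h
      obtain ⟨l, hy⟩ := h
      exact Or.inl ⟨c1, l, by rw [hy]; rfl⟩
    · rw [if_neg hc] at h
      exact absurd h id
  -- r2, (hh, gg c2)
  case r2.inr.inr.inr.inl =>
    by_cases hc : c2 = blank
    · subst hc
      rw [if_pos rfl] at h
      rw [h]
      exact Or.inr rfl
    · rw [if_neg hc] at h
      exact absurd h id
  -- l1, (inl q1, gg c2)
  case l1.inl.inr.inl c q' =>
    by_cases hc : c = c2
    · subst hc
      rw [if_pos rfl] at h
      obtain ⟨a, b, l, hδ, hy⟩ := h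
      exact ⟨q1, a, b, l, hδ, by rw [hy]; rfl⟩
    · rw [if_neg hc] at h
      exact absurd h id
  -- l2, (gg a, gg b)
  case l2.inr.inl.inr.inl q q' =>
    by_cases hδ : δ q c1 = (q', c2, false)
    · rw [if_pos hδ] at h
      obtain ⟨l, hy⟩ := h
      exact ⟨c1, c2, l, hδ, by rw [hy]; rfl⟩
    · rw [if_neg hδ] at h
      exact absurd h id
  -- tl, (gg c1, gg c2)
  case tl.inr.inl.inr.inl =>
    by_cases hc : c1 = c2
    · subst hc
      rw [if_pos rfl] at h
      obtain ⟨l, hy⟩ := h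
      exact ⟨c1 :: l, by simp [ee, gg, hy]⟩
    · rw [if_neg hc] at h
      exact absurd h id
  -- tl, (hh, hh)
  case tl.inr.inr.inr.inr =>
    rw [h]
    exact ⟨[], by simp [ee, hh]⟩
  -- r4, (hh, hh)
  case r4.inr.inr.inr.inr =>
    rw [h]
    rfl

lemma back (δ : Q → Γ → Q × Γ × Bool) (blank : Γ) :
    ∀ (x : List (TMAlpha Q Γ × TMAlpha Q Γ)) (s : St Q Γ),
      List.foldl (step δ blank) s x = .acc → Suf δ blank s x := by
  intro x
  induction x with
  | nil =>
    intro s h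
    simp only [List.foldl_nil] at h
    rw [h]
    rfl
  | cons p x ih =>
    intro s h
    rw [List.foldl_cons] at h
    exact suf_step δ blank s p x (ih _ h)

lemma tmStep_right_noext {q q' : Q} {a b : Γ} (hδ : δ q a = (q', b, true))
    (u : List Γ) (c : Γ) (v : List Γ) :
    tmStep δ blank (q, u ++ a :: c :: v, u.length) =
      some (q', u ++ b :: c :: v, u.length + 1) := by
  have hg := get?_append u a (c :: v)
  have hs := set_append u a b (c :: v)
  have hne : ¬ (u.length + 1 = (u ++ a :: c :: v).length) := by simp
  simp only [tmStep, hg]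
  rw [hδ]
  simp only [if_true, if_neg hne, hs]

lemma tmStep_right_ext {q q' : Q} {a b : Γ} (hδ : δ q a = (q', b, true))
    (u : List Γ) :
    tmStep δ blank (q, u ++ [a], u.length) =
      some (q', u ++ [b, blank], u.length + 1) := by
  have hg := get?_append u a []
  have hs := set_append u a b []
  have he : (u.length + 1 = (u ++ [a]).length) := by simp
  simp only [tmStep, hg]
  rw [hδ]
  simp only [if_true, if_pos he, hs]
  simp

lemma tmStep_left {q q' : Q} {a b : Γ} (hδ : δ q a = (q', b, false))
    (u : List Γ) (c : Γ) (v : List Γ) :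
    tmStep δ blank (q, u ++ c :: a :: v, u.length + 1) =
      some (q', u ++ c :: b :: v, u.length) := by
  have hg : (u ++ c :: a :: v)[u.length + 1]? = some a := by
    simpa using get?_append (u ++ [c]) a v
  have hs : (u ++ c :: a :: v).set (u.length + 1) b = u ++ c :: b :: v := by
    simpa using set_append (u ++ [c]) a b v
  simp only [tmStep, hg]
  rw [hδ]
  simp [hs]

lemma suf_sound (x : List (TMAlpha Q Γ × TMAlpha Q Γ))
    (h : Suf δ blank .start x) : x ∈ succLang δ blank := by
  rcases h with ⟨l, q, b, a, q', y, hδ, hx, hr2⟩ | ⟨l, c, q', q, a, b, l₂, hδ, hx⟩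
  · rcases hr2 with ⟨c, l₂, hy⟩ | hy
    · subst hy
      refine ⟨q, l ++ a :: c :: l₂, l.length, q', l ++ b :: c :: l₂, l.length + 1,
        tmStep_right_noext δ blank hδ l c l₂, ?_⟩
      rw [zipR, hx]
      simp [ee]
    · subst hy
      refine ⟨q, l ++ [a], l.length, q', l ++ [b, blank], l.length + 1,
        tmStep_right_ext δ blank hδ l, ?_⟩
      rw [zipE, hx]
  · subst hx
    refine ⟨q, l ++ c :: a :: l₂, l.length + 1, q', l ++ c :: b :: l₂, l.length,
      tmStep_left δ blank hδ l c l₂, ?_⟩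
    rw [zipL]

lemma tmStep_inv {q : Q} {w : List Γ} {j : ℕ} {q' : Q} {w' : List Γ} {j' : ℕ}
    (h : tmStep δ blank (q, w, j) = some (q', w', j')) :
    ∃ a, w[j]? = some a ∧
      ((∃ b, δ q a = (q', b, true) ∧ j' = j + 1 ∧
          w' = if j + 1 = w.length then w.set j b ++ [blank] else w.set j b) ∨
       (∃ b, δ q a = (q', b, false) ∧ j ≠ 0 ∧ j' = j - 1 ∧ w' = w.set j b)) := by
  cases hget : w[j]? with
  | none =>
    simp only [tmStep, hget] at h
    cases h
  | some a =>
    simp only [tmStep, hget] at h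
    refine ⟨a, rfl, ?_⟩
    rcases hd : δ q a with ⟨q1, b, dir⟩
    rw [hd] at h
    cases dir with
    | true =>
      have h' : (some (q1, (if j + 1 = w.length then w.set j b ++ [blank]
          else w.set j b), j + 1) : Option (Q × List Γ × ℕ)) = some (q', w', j') := h
      simp only [Option.some.injEq, Prod.mk.injEq] at h'
      obtain ⟨rfl, rfl, rfl⟩ := h'
      exact Or.inl ⟨b, rfl, rfl, rfl⟩
    | false =>
      by_cases hj : j = 0
      · have h' : (if j = 0 then (none : Option (Q × List Γ × ℕ))
            else some (q1, w.set j b, j - 1)) = some (q', w', j') := h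
        rw [if_pos hj] at h'
        cases h'
      · have h' : (if j = 0 then (none : Option (Q × List Γ × ℕ))
            else some (q1, w.set j b, j - 1)) = some (q', w', j') := h
        rw [if_neg hj] at h'
        simp only [Option.some.injEq, Prod.mk.injEq] at h'
        obtain ⟨rfl, rfl, rfl⟩ := h'
        exact Or.inr ⟨b, rfl, hj, rfl, rfl⟩

lemma get?_decomp {w : List Γ} {j : ℕ} {a : Γ} (h : w[j]? = some a) :
    ∃ u v, w = u ++ a :: v ∧ u.length = j := by
  obtain ⟨hlt, hget⟩ := List.getElem?_eq_some_iff.mp h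
  refine ⟨w.take j, w.drop (j + 1), ?_, by simp [List.length_take]; omega⟩
  conv_lhs => rw [← List.take_append_drop j w]
  congr 1
  rw [List.drop_eq_getElem_cons hlt]
  simp [← hget, List.get_eq_getElem]

lemma fwd (x : List (TMAlpha Q Γ × TMAlpha Q Γ)) (hx : x ∈ succLang δ blank) :
    List.foldl (step δ blank) .start x = .acc := by
  obtain ⟨q, w, j, q', w', j', hstep, hxeq⟩ := hx
  obtain ⟨a, hget, hcase⟩ := tmStep_inv δ blank hstep
  rcases hcase with ⟨b, hδ, hj', hw'⟩ | ⟨b, hδ, hj0, hj', hw'⟩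
  · -- right move
    obtain ⟨u, v, rfl, rfl⟩ := get?_decomp hget
    cases v with
    | nil =>
      rw [if_pos (by simp)] at hw'
      rw [set_append u a b []] at hw'
      have hw2 : w' = u ++ [b, blank] := by rw [hw']; simp
      subst hw2 hj'
      rw [hxeq, zipE]
      exact evalE δ blank hδ u
    | cons c v2 =>
      rw [if_neg (by simp)] at hw'
      rw [set_append u a b (c :: v2)] at hw'
      subst hw' hj'
      rw [hxeq, zipR]
      exact evalR δ blank hδ u c v2
  · -- left move
    have hlt : j < w.length := (List.getElem?_eq_some_iff.mp hget).1
    have hltm : j - 1 < w.length := by omega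
    obtain ⟨c, hgetc⟩ : ∃ c, w[j - 1]? = some c := ⟨_, List.getElem?_eq_getElem hltm⟩
    obtain ⟨u, v', hw, hu⟩ := get?_decomp hgetc
    have hj : j = u.length + 1 := by omega
    rw [hw, hj, show u ++ c :: v' = (u ++ [c]) ++ v' by simp,
      List.getElem?_append_right (by simp)] at hget
    simp only [List.length_append, List.length_cons, List.length_nil] at hget
    rw [show u.length + 1 - (u.length + 1) = 0 by omega] at hget
    cases v' with
    | nil => exact absurd hget (by simp)
    | cons d v =>
      have hd : d = a := by simpa using hget
      subst hd
      have hset : w.set j b = u ++ c :: b :: v := by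
        rw [hw, hj]
        simpa using set_append (u ++ [c]) a b v
      rw [hset] at hw'
      have hj'2 : j' = u.length := by omega
      subst hw' hj'2
      rw [hxeq, hw, hj, zipL]
      exact evalL δ blank hδ u c v

end Stmt16

/-- There is a finite automaton reading two configuration encodings interleaved
symbol-by-symbol that accepts exactly when the second configuration is the successor of
the first. -/

theorem stmt_16 {Q Γ : Type} [Fintype Q] [Fintype Γ] [DecidableEq Q] [DecidableEq Γ]
    (δ : Q → Γ → Q × Γ × Bool) (blank : Γ) :
    ∃ (σ : Type) (_ : Fintype σ) (D : DFA (TMAlpha Q Γ × TMAlpha Q Γ) σ),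
      D.accepts = succLang δ blank := by
  refine ⟨Stmt16.St Q Γ, inferInstance, Stmt16.M δ blank, ?_⟩
  ext x
  rw [DFA.mem_accepts]
  constructor
  · intro h
    have hacc : List.foldl (Stmt16.step δ blank) .start x = .acc := by
      have : (Stmt16.M δ blank).evalFrom (Stmt16.M δ blank).start x ∈
          ({Stmt16.St.acc} : Set (Stmt16.St Q Γ)) := h
      simpa [DFA.evalFrom, Stmt16.M, DFA.eval] using this
    exact Stmt16.suf_sound δ blank x (Stmt16.back δ blank x .start hacc)
  · intro h
    have hacc := Stmt16.fwd δ blank x h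
    show (Stmt16.M δ blank).evalFrom (Stmt16.M δ blank).start x ∈
        ({Stmt16.St.acc} : Set (Stmt16.St Q Γ))
    simpa [DFA.evalFrom, Stmt16.M, DFA.eval] using hacc
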